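/- Let n ≥ 1, k ≥ 0, and let (ε, σ) ∈ B n. Then the number of points x : Fin n → ZMod (2k+1) fixed by the action of (ε, σ) equals (2k+1)^(e(ε,σ)), where e(ε,σ) is the number of even orbits of σ on Fin n. (Equivalently, the character of the permutation representation ℂ[(ℤ/(2k+1)ℤ)^n] of B n at (ε, σ) equals (2k+1)^(e(ε,σ)).) -/

import Mathlib

/-! Common setup: the signed symmetric group `B n` as a semidirect product,
its action on `Fin n → ZMod m`, and the inclusion `B n →* B (n+1)`. -/

/-- The additive automorphism of sign vectors induced by a permutation:
`ε ↦ ε ∘ σ⁻¹`. -/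
def signAddAut (n : ℕ) (σ : Equiv.Perm (Fin n)) :
    (Fin n → ZMod 2) ≃+ (Fin n → ZMod 2) :=
  { Equiv.arrowCongr σ (Equiv.refl (ZMod 2)) with
    map_add' := fun _ _ => rfl }

/-- The action of permutations on sign vectors, as a homomorphism to the
automorphism group of `Multiplicative (Fin n → ZMod 2)`. -/
def bSignHom (n : ℕ) :
    Equiv.Perm (Fin n) →* MulAut (Multiplicative (Fin n → ZMod 2)) where
  toFun σ := AddEquiv.toMultiplicative (signAddAut n σ)
  map_one' := by ext ε; rfl
  map_mul' σ τ := by ext ε; rfl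

/-- The signed symmetric group on `n` letters, modelled as the semidirect
product `(Fin n → ZMod 2) ⋊ Equiv.Perm (Fin n)`, where a permutation acts
on sign vectors by `σ • ε = ε ∘ σ⁻¹`. -/
abbrev B (n : ℕ) :=
  Multiplicative (Fin n → ZMod 2) ⋊[bSignHom n] Equiv.Perm (Fin n)

lemma neg_one_pow_val_add {M : Type*} [Monoid M] [HasDistribNeg M] (a b : ZMod 2) :
    (-1 : M) ^ (a + b).val = (-1 : M) ^ a.val * (-1 : M) ^ b.val := by
  rw [← pow_add]
  fin_cases a <;> fin_cases b
  · rfl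
  · rfl
  · rfl
  · show (-1 : M) ^ 0 = (-1 : M) ^ 2
    rw [pow_zero, neg_one_sq]

/-- The action of `B n` on `Fin n → ZMod m`: permute coordinates and negate
the coordinates with sign `1`, i.e. `((ε,σ) • x) i = (-1)^(ε i).val * x (σ⁻¹ i)`. -/
instance BAct (n m : ℕ) : MulAction (B n) (Fin n → ZMod m) where
  smul g x := fun i =>
    (-1 : ZMod m) ^ (Multiplicative.toAdd g.left i).val * x (g.right⁻¹ i)
  one_smul x := by
    funext i
    show (-1 : ZMod m) ^ ((0 : ZMod 2)).val * x i = x i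
    simp
  mul_smul g h x := by
    funext i
    show (-1 : ZMod m) ^ ((Multiplicative.toAdd g.left i)
        + (Multiplicative.toAdd h.left (g.right⁻¹ i))).val
        * x (h.right⁻¹ (g.right⁻¹ i))
      = (-1 : ZMod m) ^ (Multiplicative.toAdd g.left i).val
        * ((-1 : ZMod m) ^ (Multiplicative.toAdd h.left (g.right⁻¹ i)).val
          * x (h.right⁻¹ (g.right⁻¹ i)))
    rw [neg_one_pow_val_add, mul_assoc]

lemma bact_smul_def {n m : ℕ} (g : B n) (x : Fin n → ZMod m) (i : Fin n) :
    (g • x) i = (-1 : ZMod m) ^ (Multiplicative.toAdd g.left i).val * x (g.right⁻¹ i) :=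
  rfl

/-- Extension of a permutation of `Fin n` to `Fin (n+1)`, fixing the last letter. -/
def extendPermEquiv {n : ℕ} (σ : Equiv.Perm (Fin n)) : Equiv.Perm (Fin (n + 1)) where
  toFun := Fin.snoc (fun i => Fin.castSucc (σ i)) (Fin.last n)
  invFun := Fin.snoc (fun i => Fin.castSucc (σ⁻¹ i)) (Fin.last n)
  left_inv j := by
    induction j using Fin.lastCases with
    | last => simp
    | cast i => simp
  right_inv j := by
    induction j using Fin.lastCases with
    | last => simp
    | cast i => simp

@[simp] lemma extendPermEquiv_castSucc {n : ℕ} (σ : Equiv.Perm (Fin n)) (i : Fin n) :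
    extendPermEquiv σ (Fin.castSucc i) = Fin.castSucc (σ i) := by
  simp [extendPermEquiv]

@[simp] lemma extendPermEquiv_last {n : ℕ} (σ : Equiv.Perm (Fin n)) :
    extendPermEquiv σ (Fin.last n) = Fin.last n := by
  simp [extendPermEquiv]

@[simp] lemma extendPermEquiv_inv {n : ℕ} (σ : Equiv.Perm (Fin n)) :
    (extendPermEquiv σ)⁻¹ = extendPermEquiv σ⁻¹ := by
  refine Equiv.ext fun j => ?_
  rw [Equiv.Perm.inv_def, Equiv.symm_apply_eq]
  induction j using Fin.lastCases with
  | last => simp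
  | cast i => simp

@[simp] lemma extendPermEquiv_symm_castSucc {n : ℕ} (σ : Equiv.Perm (Fin n)) (i : Fin n) :
    (extendPermEquiv σ).symm (Fin.castSucc i) = Fin.castSucc (σ.symm i) := by
  rw [Equiv.symm_apply_eq]
  simp [Equiv.Perm.inv_def]

@[simp] lemma extendPermEquiv_symm_last {n : ℕ} (σ : Equiv.Perm (Fin n)) :
    (extendPermEquiv σ).symm (Fin.last n) = Fin.last n := by
  rw [Equiv.symm_apply_eq]
  simp

/-- The embedding `Equiv.Perm (Fin n) →* Equiv.Perm (Fin (n+1))` extending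
a permutation by the identity on the last letter. -/
def extendPerm (n : ℕ) : Equiv.Perm (Fin n) →* Equiv.Perm (Fin (n + 1)) where
  toFun := extendPermEquiv
  map_one' := by
    ext j
    induction j using Fin.lastCases with
    | last => simp
    | cast i => simp
  map_mul' σ τ := by
    ext j
    induction j using Fin.lastCases with
    | last => simp
    | cast i => simp

/-- The inclusion `B n →* B (n+1)`: extend the sign vector by `0` in the last
coordinate and the permutation by the identity on the last letter. -/
def ιB (n : ℕ) : B n →* B (n + 1) where
  toFun g :=
    ⟨Multiplicative.ofAdd
      (Fin.snoc (Multiplicative.toAdd g.left) 0 : Fin (n + 1) → ZMod 2), extendPerm n g.right⟩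
  map_one' := by
    refine SemidirectProduct.ext ?_ ?_
    · show Multiplicative.ofAdd
          (Fin.snoc (0 : Fin n → ZMod 2) (0 : ZMod 2) : Fin (n + 1) → ZMod 2) = 1
      have h : (Fin.snoc (0 : Fin n → ZMod 2) (0 : ZMod 2) : Fin (n + 1) → ZMod 2) = 0 := by
        funext j
        induction j using Fin.lastCases with
        | last => simp
        | cast i => simp
      rw [h]; rfl
    · show extendPerm n 1 = 1
      exact map_one _
  map_mul' g h := by
    refine SemidirectProduct.ext ?_ ?_
    · show Multiplicative.ofAdd
          (Fin.snoc (Multiplicative.toAdd ((g * h).left)) 0 : Fin (n + 1) → ZMod 2) = _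
      have key : (Fin.snoc (Multiplicative.toAdd ((g * h).left)) 0 : Fin (n + 1) → ZMod 2)
          = (Fin.snoc (Multiplicative.toAdd g.left) 0 : Fin (n + 1) → ZMod 2)
            + (Fin.snoc (Multiplicative.toAdd h.left) 0 : Fin (n + 1) → ZMod 2)
              ∘ ⇑((extendPermEquiv g.right)⁻¹) := by
        funext j
        induction j using Fin.lastCases with
        | last => simp
        | cast i =>
          show (Fin.snoc (Multiplicative.toAdd g.left
              + (Multiplicative.toAdd h.left) ∘ ⇑(g.right⁻¹)) 0
              : Fin (n + 1) → ZMod 2) i.castSucc = _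
          simp [Equiv.Perm.inv_def]
      rw [key]; rfl
    · show extendPerm n (g * h).right = _
      exact map_mul (extendPerm n) g.right h.right

/-- The orbits of (the cyclic subgroup generated by) a permutation `σ` of
`Fin n`, as finsets; `j` lies in the orbit of `i` iff `σ.SameCycle i j`, i.e.
iff `(σ ^ z) i = j` for some integer `z`.  Singleton orbits (fixed points of
`σ`) are included. -/
def orbitsOf {n : ℕ} (σ : Equiv.Perm (Fin n)) : Finset (Finset (Fin n)) :=
  Finset.univ.image fun i => Finset.univ.filter fun j => σ.SameCycle i j

/-- The number of orbits `O` of `σ` on `Fin n` that are even, i.e. with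
`∑ j ∈ O, ε j = 0` in `ZMod 2`. -/
def evenOrbitCount {n : ℕ} (ε : Fin n → ZMod 2) (σ : Equiv.Perm (Fin n)) : ℕ :=
  ((orbitsOf σ).filter fun O => (∑ j ∈ O, ε j) = 0).card

/-- The number of orbits `O` of `σ` on `Fin n` that are odd, i.e. with
`∑ j ∈ O, ε j ≠ 0` in `ZMod 2`. -/
def oddOrbitCount {n : ℕ} (ε : Fin n → ZMod 2) (σ : Equiv.Perm (Fin n)) : ℕ :=
  ((orbitsOf σ).filter fun O => (∑ j ∈ O, ε j) ≠ 0).card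


section AuxOrbit

variable {n : ℕ} (σ : Equiv.Perm (Fin n)) (ε : Fin n → ZMod 2)

/-- The orbit of `i` under `σ` as a finset. -/
def orbF (i : Fin n) : Finset (Fin n) :=
  Finset.univ.filter fun j => σ.SameCycle i j

lemma mem_orbF {i j : Fin n} : j ∈ orbF σ i ↔ σ.SameCycle i j := by
  simp [orbF]

lemma orbF_eq {i j : Fin n} (h : σ.SameCycle i j) : orbF σ i = orbF σ j := by
  ext a
  simp only [mem_orbF]
  exact ⟨fun h' => h.symm.trans h', fun h' => h.trans h'⟩

lemma orbF_mem (i : Fin n) : orbF σ i ∈ orbitsOf σ :=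
  Finset.mem_image.mpr ⟨i, Finset.mem_univ i, rfl⟩

lemma orbitsOf_eq_orbF {O : Finset (Fin n)} (hO : O ∈ orbitsOf σ) {i : Fin n}
    (hi : i ∈ O) : O = orbF σ i := by
  obtain ⟨i0, -, rfl⟩ := Finset.mem_image.mp hO
  have : i ∈ orbF σ i0 := hi
  exact orbF_eq σ ((mem_orbF σ).mp this)

lemma min'_congr {α : Type*} [LinearOrder α] {s t : Finset α} (h : s = t)
    (hs : s.Nonempty) (ht : t.Nonempty) : s.min' hs = t.min' ht := by
  subst h; rfl

/-- Representative (minimum) of the orbit of `i`. -/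
def repF (i : Fin n) : Fin n :=
  (orbF σ i).min' ⟨i, (mem_orbF σ).mpr (Equiv.Perm.SameCycle.refl σ i)⟩

lemma repF_sameCycle (i : Fin n) : σ.SameCycle i (repF σ i) :=
  (mem_orbF σ).mp ((orbF σ i).min'_mem _)

lemma repF_congr {i j : Fin n} (h : σ.SameCycle i j) : repF σ i = repF σ j :=
  min'_congr (orbF_eq σ h) _ _

lemma exists_pow_rep (i : Fin n) : ∃ t : ℕ, (σ ^ t) (repF σ i) = i := by
  obtain ⟨t, -, ht⟩ := (repF_sameCycle σ i).symm.exists_pow_eq'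
  exact ⟨t, ht⟩

/-- Least `t` with `σ^t (repF σ i) = i`. -/
def tF (i : Fin n) : ℕ := Nat.find (exists_pow_rep σ i)

lemma tF_spec (i : Fin n) : (σ ^ tF σ i) (repF σ i) = i :=
  Nat.find_spec (exists_pow_rep σ i)

lemma tF_eq_zero {i : Fin n} (h : repF σ i = i) : tF σ i = 0 :=
  (Nat.find_eq_zero (exists_pow_rep σ i)).mpr (by rw [pow_zero, h]; rfl)

lemma perm_isPeriodicPt (i : Fin n) : Function.IsPeriodicPt ⇑σ (orderOf σ) i := by
  show (⇑σ)^[orderOf σ] i = i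
  rw [Equiv.Perm.iterate_eq_pow, pow_orderOf_eq_one]
  rfl

lemma minPer_pos (i : Fin n) : 0 < Function.minimalPeriod ⇑σ i :=
  (perm_isPeriodicPt σ i).minimalPeriod_pos (orderOf_pos σ)

lemma pow_minPer (i : Fin n) : (σ ^ Function.minimalPeriod ⇑σ i) i = i := by
  have h := Function.isPeriodicPt_minimalPeriod ⇑σ i
  rwa [Function.IsPeriodicPt, Function.IsFixedPt, Equiv.Perm.iterate_eq_pow] at h

lemma pow_inj_on (i : Fin n) {a b : ℕ} (ha : a < Function.minimalPeriod ⇑σ i)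
    (hb : b < Function.minimalPeriod ⇑σ i) (h : (σ ^ a) i = (σ ^ b) i) : a = b := by
  refine Function.iterate_injOn_Iio_minimalPeriod (f := ⇑σ) (x := i) ha hb ?_
  simpa [Equiv.Perm.iterate_eq_pow] using h

lemma tF_lt (i : Fin n) : tF σ i < Function.minimalPeriod ⇑σ (repF σ i) := by
  by_contra hcon
  push_neg at hcon
  set p := Function.minimalPeriod ⇑σ (repF σ i) with hp
  have hpos : 0 < p := minPer_pos σ _
  have hkey : (σ ^ (tF σ i - p)) (repF σ i) = i := by
    have h1 := tF_spec σ i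
    rw [← Nat.sub_add_cancel hcon, pow_add, Equiv.Perm.mul_apply, pow_minPer] at h1
    exact h1
  exact Nat.find_min (exists_pow_rep σ i)
    (Nat.sub_lt (lt_of_lt_of_le hpos hcon) hpos) hkey

lemma orbF_eq_image (i : Fin n) :
    orbF σ i = (Finset.range (Function.minimalPeriod ⇑σ i)).image fun t => (σ ^ t) i := by
  ext j
  simp only [mem_orbF, Finset.mem_image, Finset.mem_range]
  constructor
  · intro h
    obtain ⟨t, -, rfl⟩ := h.exists_pow_eq'
    refine ⟨t % Function.minimalPeriod ⇑σ i, Nat.mod_lt _ (minPer_pos σ i), ?_⟩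
    have h2 := Function.iterate_mod_minimalPeriod_eq (f := ⇑σ) (x := i) (n := t)
    rwa [Equiv.Perm.iterate_eq_pow, Equiv.Perm.iterate_eq_pow] at h2
  · rintro ⟨t, -, rfl⟩
    exact ⟨(t : ℤ), by rw [zpow_natCast]⟩

lemma sum_orbF (i : Fin n) :
    ∑ j ∈ orbF σ i, ε j
      = ∑ s ∈ Finset.range (Function.minimalPeriod ⇑σ i), ε ((σ ^ s) i) := by
  rw [orbF_eq_image, Finset.sum_image]
  intro a ha b hb hab
  exact pow_inj_on σ i (Finset.mem_range.mp ha) (Finset.mem_range.mp hb) hab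

lemma sum_shift {p : ℕ} {i : Fin n} (h : (σ ^ p) i = i) :
    ∑ s ∈ Finset.range p, ε ((σ ^ (s + 1)) i) = ∑ s ∈ Finset.range p, ε ((σ ^ s) i) := by
  have h1 := Finset.sum_range_succ (fun s => ε ((σ ^ s) i)) p
  have h2 := Finset.sum_range_succ' (fun s => ε ((σ ^ s) i)) p
  have h3 : ε ((σ ^ p) i) = ε ((σ ^ 0) i) := by rw [h, pow_zero]; rfl
  rw [h2, h3] at h1
  -- h1 : ∑ f(s+1) + f 0 = ∑ f s + f 0
  exact add_right_cancel h1

lemma iterate_fix {m : ℕ} {x : Fin n → ZMod m}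
    (hx : ∀ j, x (σ j) = (-1 : ZMod m) ^ (ε (σ j)).val * x j) (i : Fin n) (t : ℕ) :
    x ((σ ^ t) i)
      = (-1 : ZMod m) ^ ((∑ s ∈ Finset.range t, ε ((σ ^ (s + 1)) i)).val) * x i := by
  induction t with
  | zero => simp [show ((0 : ZMod 2)).val = 0 from rfl]
  | succ t ih =>
    have hstep : (σ ^ (t + 1)) i = σ ((σ ^ t) i) := by
      rw [pow_succ', Equiv.Perm.mul_apply]
    rw [hstep, hx, ih, ← hstep, Finset.sum_range_succ, neg_one_pow_val_add]
    ring

lemma eq_zero_of_eq_neg {k : ℕ} {a : ZMod (2 * k + 1)} (h : a = -a) : a = 0 := by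
  have h2 : a + a = 0 := by nth_rewrite 1 [h]; ring
  have h3 : ((2 * k + 1 : ℕ) : ZMod (2 * k + 1)) = 0 := ZMod.natCast_self _
  have hc := ZMod.natCast_self (2 * k + 1)
  rw [Nat.cast_add, Nat.cast_mul, Nat.cast_one, Nat.cast_ofNat] at hc
  linear_combination (-(k : ZMod (2 * k + 1))) * h2 + a * hc

lemma fixed_zero_of_odd {k : ℕ} {x : Fin n → ZMod (2 * k + 1)}
    (hx : ∀ j, x (σ j) = (-1 : ZMod (2 * k + 1)) ^ (ε (σ j)).val * x j) (i : Fin n)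
    (hodd : ∑ j ∈ orbF σ i, ε j ≠ 0) : x i = 0 := by
  have h1 := iterate_fix σ ε hx i (Function.minimalPeriod ⇑σ i)
  rw [pow_minPer] at h1
  have hs : (∑ s ∈ Finset.range (Function.minimalPeriod ⇑σ i), ε ((σ ^ (s + 1)) i)) = 1 := by
    rw [sum_shift σ ε (pow_minPer σ i), ← sum_orbF]
    have hall : ∀ a : ZMod 2, a ≠ 0 → a = 1 := by decide
    exact hall _ hodd
  rw [hs, show ((1 : ZMod 2)).val = 1 from rfl, pow_one, neg_one_mul] at h1
  exact eq_zero_of_eq_neg h1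

end AuxOrbit

set_option synthInstance.maxHeartbeats 1000000 in
/-- **Lemma (character of the odd generalized parking space).**  For
`g = (ε, σ) ∈ B n`, the number of points of `Fin n → ZMod (2k+1)` fixed by
`g` is `(2k+1) ^ e(ε,σ)`, where `e(ε,σ)` is the number of even orbits of `σ`
on `Fin n`. -/
theorem card_fixedPoints_odd (n k : ℕ) (hn : 1 ≤ n) (g : B n) :
    Nat.card {x : Fin n → ZMod (2 * k + 1) // g • x = x}
      = (2 * k + 1) ^ evenOrbitCount (Multiplicative.toAdd g.left) g.right := by
  classical
  set m := 2 * k + 1 with hm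
  set σ := g.right with hσ
  set ε : Fin n → ZMod 2 := Multiplicative.toAdd g.left with hε
  -- characterize fixed points
  have hfix_iff : ∀ x : Fin n → ZMod m, g • x = x ↔
      ∀ j, x (σ j) = (-1 : ZMod m) ^ (ε (σ j)).val * x j := by
    intro x
    constructor
    · intro h j
      have h1 := congrFun h (σ j)
      rw [bact_smul_def] at h1
      simpa [hσ, hε] using h1.symm
    · intro h
      funext i
      rw [bact_smul_def]
      have h1 := h (σ⁻¹ i)
      rw [Equiv.Perm.inv_def, Equiv.apply_symm_apply] at h1
      exact h1.symm
  set Pfin : Finset (Finset (Fin n)) :=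
    (orbitsOf σ).filter (fun O => (∑ j ∈ O, ε j) = 0) with hPfin
  have hOne : ∀ O ∈ orbitsOf σ, O.Nonempty := by
    intro O hO
    obtain ⟨i, -, rfl⟩ := Finset.mem_image.mp hO
    exact ⟨i, (mem_orbF σ).mpr (Equiv.Perm.SameCycle.refl σ i)⟩
  -- the comparison map
  set Φ : {x : Fin n → ZMod m // g • x = x} → ({O // O ∈ Pfin} → ZMod m) :=
    fun x O => x.1 (O.1.min' (hOne O.1 (Finset.mem_filter.mp O.2).1)) with hΦ
  have hbij : Function.Bijective Φ := by
    constructor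
    · -- injective
      rintro ⟨x, hx⟩ ⟨y, hy⟩ hxy
      rw [hfix_iff] at hx hy
      refine Subtype.ext (funext fun i => ?_)
      show x i = y i
      by_cases h0 : (∑ j ∈ orbF σ i, ε j) = 0
      · have hmemP : orbF σ i ∈ Pfin :=
          Finset.mem_filter.mpr ⟨orbF_mem σ i, h0⟩
        have hz : x (repF σ i) = y (repF σ i) := by
          have := congrFun hxy ⟨orbF σ i, hmemP⟩
          simpa [hΦ, repF] using this
        set z : Fin n → ZMod m := fun a => x a - y a with hzdef
        have hzfix : ∀ j, z (σ j) = (-1 : ZMod m) ^ (ε (σ j)).val * z j := by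
          intro j
          simp only [hzdef, hx j, hy j]
          ring
        have h1 := iterate_fix σ ε hzfix (repF σ i) (tF σ i)
        rw [tF_spec] at h1
        have : z i = 0 := by
          rw [h1, show z (repF σ i) = 0 by simp [hzdef, hz], mul_zero]
        exact sub_eq_zero.mp this
      · rw [fixed_zero_of_odd σ ε hx i h0, fixed_zero_of_odd σ ε hy i h0]
    · -- surjective
      intro f
      set F : Fin n → ZMod m := fun i =>
        if h : orbF σ i ∈ Pfin then f ⟨orbF σ i, h⟩ else 0 with hF
      have hF_congr : ∀ {i j : Fin n}, σ.SameCycle i j → F i = F j := by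
        intro i j h
        have hO := orbF_eq σ h
        show (if hc : orbF σ i ∈ Pfin then f ⟨orbF σ i, hc⟩ else 0)
          = (if hc : orbF σ j ∈ Pfin then f ⟨orbF σ j, hc⟩ else 0)
        simp only [hO]
      have hFodd : ∀ i : Fin n, (∑ j ∈ orbF σ i, ε j) ≠ 0 → F i = 0 := by
        intro i h
        show (if hc : orbF σ i ∈ Pfin then f ⟨orbF σ i, hc⟩ else 0) = 0
        refine dif_neg ?_
        intro hmem
        exact h (Finset.mem_filter.mp hmem).2
      set S : Fin n → ZMod 2 := fun i =>
        ∑ s ∈ Finset.range (tF σ i), ε ((σ ^ (s + 1)) (repF σ i)) with hS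
      set x : Fin n → ZMod m := fun i => (-1 : ZMod m) ^ (S i).val * F i with hxdef
      have hx : ∀ j, x (σ j) = (-1 : ZMod m) ^ (ε (σ j)).val * x j := by
        intro i
        have hsc : σ.SameCycle i (σ i) := ⟨1, by simp⟩
        have hrep : repF σ (σ i) = repF σ i := (repF_congr σ hsc).symm
        by_cases hodd : (∑ j ∈ orbF σ i, ε j) = 0
        · -- even orbit
          have hT : (σ ^ tF σ i) (repF σ i) = i := tF_spec σ i
          have hTp : tF σ i < Function.minimalPeriod ⇑σ (repF σ i) := tF_lt σ i
          have hstep : (σ ^ (tF σ i + 1)) (repF σ i) = σ i := by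
            rw [pow_succ', Equiv.Perm.mul_apply, hT]
          have hsum : S (σ i) = S i + ε (σ i) := by
            rcases eq_or_lt_of_le (Nat.succ_le_of_lt hTp) with hEq | hLt
            · -- wraps around: σ i = repF σ i
              have hEq' : tF σ i + 1 = Function.minimalPeriod ⇑σ (repF σ i) := hEq
              have hri : σ i = repF σ i := by
                rw [← hstep, hEq', pow_minPer]
              have ht0 : tF σ (σ i) = 0 := tF_eq_zero σ (by rw [hrep, hri])
              have hz : S (σ i) = 0 := by
                show (∑ s ∈ Finset.range (tF σ (σ i)), ε ((σ ^ (s + 1)) (repF σ (σ i)))) = 0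
                rw [ht0, Finset.sum_range_zero]
              have htot : S i + ε (σ i)
                  = ∑ s ∈ Finset.range (tF σ i + 1), ε ((σ ^ (s + 1)) (repF σ i)) := by
                rw [Finset.sum_range_succ, hstep]
              rw [hz, htot, hEq', sum_shift σ ε (pow_minPer σ _),
                ← sum_orbF, ← orbF_eq σ (repF_sameCycle σ i)]
              exact hodd.symm
            · -- no wrap: tF σ (σ i) = tF σ i + 1
              have ht1 : tF σ (σ i) = tF σ i + 1 := by
                have h1 : (σ ^ tF σ (σ i)) (repF σ i) = σ i := by
                  have := tF_spec σ (σ i); rwa [hrep] at this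
                have h2 : tF σ (σ i) < Function.minimalPeriod ⇑σ (repF σ i) := by
                  have := tF_lt σ (σ i); rwa [hrep] at this
                exact pow_inj_on σ (repF σ i) h2 hLt (h1.trans hstep.symm)
              show (∑ s ∈ Finset.range (tF σ (σ i)), ε ((σ ^ (s + 1)) (repF σ (σ i))))
                = S i + ε (σ i)
              rw [ht1, hrep, Finset.sum_range_succ, hstep]
          show (-1 : ZMod m) ^ (S (σ i)).val * F (σ i)
            = (-1 : ZMod m) ^ (ε (σ i)).val * ((-1 : ZMod m) ^ (S i).val * F i)
          rw [hF_congr hsc.symm, hsum, neg_one_pow_val_add]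
          ring
        · -- odd orbit: everything vanishes
          have h1 : F (σ i) = 0 := hFodd _ (by rwa [← orbF_eq σ hsc])
          have h2 : F i = 0 := hFodd _ hodd
          show (-1 : ZMod m) ^ (S (σ i)).val * F (σ i)
            = (-1 : ZMod m) ^ (ε (σ i)).val * ((-1 : ZMod m) ^ (S i).val * F i)
          rw [h1, h2, mul_zero, mul_zero, mul_zero]
      refine ⟨⟨x, (hfix_iff x).mpr hx⟩, ?_⟩
      funext O
      obtain ⟨O, hO⟩ := O
      have hOorb : O ∈ orbitsOf σ := (Finset.mem_filter.mp hO).1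
      set r0 := O.min' (hOne O hOorb) with hr0def
      have hr0mem : r0 ∈ O := O.min'_mem _
      have hOrb : O = orbF σ r0 := orbitsOf_eq_orbF σ hOorb hr0mem
      have hrep0 : repF σ r0 = r0 := by
        rw [repF]
        exact (min'_congr hOrb.symm _ _).trans hr0def.symm
      have ht0 : tF σ r0 = 0 := tF_eq_zero σ hrep0
      have hmem2 : orbF σ r0 ∈ Pfin := hOrb ▸ hO
      show (-1 : ZMod m) ^ (S r0).val * F r0 = f ⟨O, hO⟩
      have hS0 : S r0 = 0 := by
        show (∑ s ∈ Finset.range (tF σ r0), ε ((σ ^ (s + 1)) (repF σ r0))) = 0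
        rw [ht0, Finset.sum_range_zero]
      rw [hS0, show ((0 : ZMod 2)).val = 0 from rfl, pow_zero, one_mul]
      show (if hc : orbF σ r0 ∈ Pfin then f ⟨orbF σ r0, hc⟩ else 0) = f ⟨O, hO⟩
      rw [dif_pos hmem2]
      congr 1
      exact Subtype.ext hOrb.symm
  calc Nat.card {x : Fin n → ZMod m // g • x = x}
      = Nat.card ({O // O ∈ Pfin} → ZMod m) := Nat.card_eq_of_bijective Φ hbij
    _ = Nat.card (ZMod m) ^ Nat.card {O // O ∈ Pfin} := Nat.card_fun
    _ = m ^ Pfin.card := by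
        rw [Nat.card_zmod, Nat.card_eq_fintype_card, Fintype.card_coe]
    _ = m ^ evenOrbitCount ε σ := by rw [evenOrbitCount]
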